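/- Let α > −1, α + β > −1/2, δ ∈ ℝ and 1 < p < ∞, and let S be any of the maximal operators V_{*,1}^{α,β}, V_{*,2}^{α,β}, Ṽ_{*,2}^{α,β}. If S is well defined and bounded on L^p(x^δ dx), i.e. S f(x) < ∞ for almost every x > 0 for every nonnegative f ∈ L^p(x^δ dx) and there is a constant C with ‖Sf‖_{L^p(x^δ dx)} ≤ C‖f‖_{L^p(x^δ dx)} for all nonnegative f ∈ L^p(x^δ dx), then necessarily δ < (2α+2)p − 1 and −1 < δ. -/

import Mathlib

open MeasureTheory Set Filter
open scoped ENNReal NNReal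

noncomputable def V1 (a b t : ℝ) (f : ℝ → ℝ) (x : ℝ) : ℝ≥0∞ :=
  if x < t then
    ENNReal.ofReal (t ^ (-(2*a) - 2*b)) *
      ∫⁻ z in Set.Ioo (0 : ℝ) (t - x),
        ENNReal.ofReal ((t ^ 2 - (x - z) ^ 2) ^ (-a - 1/2) *
          (t ^ 2 - (x + z) ^ 2) ^ (a + b - 1/2) * z ^ (2*a + 1) * f z)
  else 0

noncomputable def V2 (a b t : ℝ) (f : ℝ → ℝ) (x : ℝ) : ℝ≥0∞ :=
  if x < t then
    ENNReal.ofReal (t ^ (-(2*a) - 2*b)) *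
      ∫⁻ z in Set.Ioo (0 : ℝ) (t - x),
        ENNReal.ofReal ((t ^ 2 - (x - z) ^ 2) ^ (b - 1) * z ^ (2*a + 1) * f z)
  else 0

noncomputable def V2t (a b t : ℝ) (f : ℝ → ℝ) (x : ℝ) : ℝ≥0∞ :=
  if x < t then
    ENNReal.ofReal (t ^ (-(2*a) - 2*b)) *
      ∫⁻ z in Set.Ioo (0 : ℝ) (t - x),
        ENNReal.ofReal ((t ^ 2 - (x - z) ^ 2) ^ (b - 1) *
          Real.log (2 * (t ^ 2 - (x - z) ^ 2) / (t ^ 2 - (x + z) ^ 2)) *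
          z ^ (2*a + 1) * f z)
  else 0

noncomputable def Vstar1 (a b : ℝ) (f : ℝ → ℝ) (x : ℝ) : ℝ≥0∞ :=
  ⨆ t ∈ Set.Ioi (0 : ℝ), V1 a b t f x

noncomputable def Vstar2 (a b : ℝ) (f : ℝ → ℝ) (x : ℝ) : ℝ≥0∞ :=
  ⨆ t ∈ Set.Ioi (0 : ℝ), V2 a b t f x

noncomputable def Vstar2t (a b : ℝ) (f : ℝ → ℝ) (x : ℝ) : ℝ≥0∞ :=
  ⨆ t ∈ Set.Ioi (0 : ℝ), V2t a b t f x

noncomputable def wNorm (p δ : ℝ) (g : ℝ → ℝ≥0∞) : ℝ≥0∞ :=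
  (∫⁻ x in Set.Ioi (0 : ℝ), g x ^ p * ENNReal.ofReal (x ^ δ)) ^ (1 / p)

noncomputable def wNormR (p δ : ℝ) (f : ℝ → ℝ) : ℝ≥0∞ :=
  wNorm p δ fun x => ENNReal.ofReal |f x|

lemma lint_rpow_Ioo {e r : ℝ} (he : -1 < e) (hr : 0 < r) :
    ∫⁻ x in Ioo (0:ℝ) r, ENNReal.ofReal (x ^ e) = ENNReal.ofReal (r ^ (e+1) / (e+1)) := by
  rw [← MeasureTheory.ofReal_integral_eq_lintegral_ofReal
    ((intervalIntegral.integrableOn_Ioo_rpow_iff hr).mpr he)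
    (by filter_upwards [ae_restrict_mem measurableSet_Ioo] with x hx
        exact Real.rpow_nonneg hx.1.le e)]
  congr 1
  rw [← integral_Ioc_eq_integral_Ioo, ← intervalIntegral.integral_of_le hr.le,
    integral_rpow (Or.inl he), Real.zero_rpow (by linarith), sub_zero]

lemma lint_rpow_Ioo_top {e : ℝ} (he : e ≤ -1) :
    ∫⁻ x in Ioo (0:ℝ) 1, ENNReal.ofReal (x ^ e) = ⊤ := by
  by_contra h
  have hm : Measurable fun x : ℝ => x ^ e := by fun_prop
  have hint : IntegrableOn (fun x : ℝ => x ^ e) (Ioo (0:ℝ) 1) := by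
    refine ⟨hm.aestronglyMeasurable, ?_⟩
    rw [hasFiniteIntegral_iff_ofReal
      (by filter_upwards [ae_restrict_mem measurableSet_Ioo] with x hx
          exact Real.rpow_nonneg hx.1.le e)]
    exact lt_top_iff_ne_top.mpr h
  rw [intervalIntegral.integrableOn_Ioo_rpow_iff one_pos] at hint
  linarith

lemma lint_support {g : ℝ → ℝ≥0∞} {s : Set ℝ} (hs : MeasurableSet s) (hsub : s ⊆ Ioi (0:ℝ))
    (hg : ∀ x ∈ Ioi (0:ℝ) \ s, g x = 0) :
    ∫⁻ x in Ioi (0:ℝ), g x = ∫⁻ x in s, g x := by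
  rw [← Set.union_diff_cancel hsub, lintegral_union (measurableSet_Ioi.diff hs)
    Set.disjoint_sdiff_right]
  have : ∫⁻ x in Ioi (0:ℝ) \ s, g x = 0 := by
    rw [setLIntegral_congr_fun (measurableSet_Ioi.diff hs)
      (fun x hx => hg x hx)]
    simp
  rw [this, add_zero]

lemma rpow_lb (e : ℝ) : ∃ m : ℝ, 0 < m ∧ ∀ r : ℝ, 7/16 ≤ r → r ≤ 16 → m ≤ r ^ e := by
  refine ⟨min ((7/16:ℝ) ^ e) ((16:ℝ) ^ e),
    lt_min (Real.rpow_pos_of_pos (by norm_num) _) (Real.rpow_pos_of_pos (by norm_num) _),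
    fun r h1 h2 => ?_⟩
  rcases le_or_gt 0 e with he | he
  · exact (min_le_left _ _).trans (Real.rpow_le_rpow (by norm_num) h1 he)
  · exact (min_le_right _ _).trans
      (Real.rpow_le_rpow_of_nonpos (lt_of_lt_of_le (by norm_num) h1) h2 he.le)

lemma mul_bound2 {m1 m2 K1 K2 w : ℝ} (h1 : m1 ≤ K1) (h2 : m2 ≤ K2)
    (hm1 : 0 ≤ m1) (hm2 : 0 ≤ m2) (hw : 0 ≤ w) : m1 * m2 * w ≤ K1 * K2 * w :=
  mul_le_mul_of_nonneg_right (mul_le_mul h1 h2 hm2 (hm1.trans h1)) hw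

lemma mul_bound3 {m1 m2 m3 K1 K2 K3 w : ℝ} (h1 : m1 ≤ K1) (h2 : m2 ≤ K2) (h3 : m3 ≤ K3)
    (hm1 : 0 ≤ m1) (hm2 : 0 ≤ m2) (hm3 : 0 ≤ m3) (hw : 0 ≤ w) :
    m1 * m2 * m3 * w ≤ K1 * K2 * K3 * w :=
  mul_le_mul_of_nonneg_right
    (mul_le_mul (mul_le_mul h1 h2 hm2 (hm1.trans h1)) h3 hm3
      (mul_nonneg (hm1.trans h1) (hm2.trans h2))) hw

lemma V_ge {e0 c : ℝ} (hc : 0 ≤ c) (he0 : 0 ≤ e0) {G h : ℝ → ℝ} {s s' : Set ℝ}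
    (hs : MeasurableSet s) (hss : s ⊆ s') (hpt : ∀ z ∈ s, c * h z ≤ e0 * G z) :
    ENNReal.ofReal c * ∫⁻ z in s, ENNReal.ofReal (h z) ≤
      ENNReal.ofReal e0 * ∫⁻ z in s', ENNReal.ofReal (G z) := by
  calc ENNReal.ofReal c * ∫⁻ z in s, ENNReal.ofReal (h z)
      = ∫⁻ z in s, ENNReal.ofReal (c * h z) := by
        simp_rw [ENNReal.ofReal_mul hc]
        exact (lintegral_const_mul' _ _ ENNReal.ofReal_ne_top).symm
    _ ≤ ∫⁻ z in s', ENNReal.ofReal (e0 * G z) :=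
        (setLIntegral_mono' hs fun z hz => ENNReal.ofReal_le_ofReal (hpt z hz)).trans
          (lintegral_mono_set hss)
    _ = _ := by
        simp_rw [ENNReal.ofReal_mul he0]
        exact lintegral_const_mul' _ _ ENNReal.ofReal_ne_top

set_option maxHeartbeats 1000000 in
lemma Slb (a b : ℝ) (S : (ℝ → ℝ) → ℝ → ℝ≥0∞)
    (hS : S = Vstar1 a b ∨ S = Vstar2 a b ∨ S = Vstar2t a b) :
    ∃ c₁ c₂ : ℝ, 0 < c₁ ∧ 0 < c₂ ∧ ∀ f : ℝ → ℝ, (∀ z, 0 ≤ f z) →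
      (∀ x ∈ Ioo (0:ℝ) (1/2:ℝ),
        ENNReal.ofReal c₁ * (∫⁻ z in Ioo (0:ℝ) (1/4:ℝ),
          ENNReal.ofReal (z ^ (2*a + 1) * f z)) ≤ S f x) ∧
      (∀ x ∈ Ioo (0:ℝ) 1,
        ENNReal.ofReal c₂ * (∫⁻ z in Ioo (1:ℝ) 2, ENNReal.ofReal (f z)) ≤ S f x) := by
  obtain ⟨mA, hmA, hA⟩ := rpow_lb (-a - 1/2)
  obtain ⟨mB, hmB, hB⟩ := rpow_lb (a + b - 1/2)
  obtain ⟨mD, hmD, hD⟩ := rpow_lb (b - 1)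
  obtain ⟨mC, hmC, hCz⟩ := rpow_lb (2*a + 1)
  have hL2 : (0:ℝ) < Real.log 2 := Real.log_pos one_lt_two
  have he4 : (0:ℝ) < (4:ℝ) ^ (-(2*a) - 2*b) := Real.rpow_pos_of_pos (by norm_num) _
  rcases hS with rfl | rfl | rfl
  · refine ⟨mA * mB, (4:ℝ) ^ (-(2*a) - 2*b) * (mA * mB * mC),
      mul_pos hmA hmB, mul_pos he4 (mul_pos (mul_pos hmA hmB) hmC), fun f hf => ⟨?_, ?_⟩⟩
    · intro x hx
      obtain ⟨hx0, hx2⟩ := hx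
      refine le_trans ?_
        (le_iSup₂ (f := fun t (_ : t ∈ Ioi (0:ℝ)) => V1 a b t f x) 1 (mem_Ioi.mpr one_pos))
      unfold V1
      rw [if_pos (show x < (1:ℝ) by linarith)]
      refine V_ge (mul_pos hmA hmB).le (Real.rpow_nonneg (by norm_num) _) measurableSet_Ioo
        (Ioo_subset_Ioo_right (by linarith)) ?_
      intro z hz
      obtain ⟨hz0, hz4⟩ := hz
      have h1 : 7/16 ≤ (1:ℝ) ^ 2 - (x - z) ^ 2 := by nlinarith
      have h1' : (1:ℝ) ^ 2 - (x - z) ^ 2 ≤ 16 := by nlinarith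
      have h2 : 7/16 ≤ (1:ℝ) ^ 2 - (x + z) ^ 2 := by nlinarith
      have h2' : (1:ℝ) ^ 2 - (x + z) ^ 2 ≤ 16 := by nlinarith
      have hw : 0 ≤ z ^ (2*a + 1) * f z :=
        mul_nonneg (Real.rpow_nonneg hz0.le _) (hf z)
      calc mA * mB * (z ^ (2*a + 1) * f z)
          ≤ ((1:ℝ) ^ 2 - (x - z) ^ 2) ^ (-a - 1/2) *
              ((1:ℝ) ^ 2 - (x + z) ^ 2) ^ (a + b - 1/2) * (z ^ (2*a + 1) * f z) :=
            mul_bound2 (hA _ h1 h1') (hB _ h2 h2') hmA.le hmB.le hw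
        _ = (1:ℝ) ^ (-(2*a) - 2*b) *
              (((1:ℝ) ^ 2 - (x - z) ^ 2) ^ (-a - 1/2) *
                ((1:ℝ) ^ 2 - (x + z) ^ 2) ^ (a + b - 1/2) * z ^ (2*a + 1) * f z) := by
            rw [Real.one_rpow]; ring
    · intro x hx
      obtain ⟨hx0, hx1⟩ := hx
      refine le_trans ?_
        (le_iSup₂ (f := fun t (_ : t ∈ Ioi (0:ℝ)) => V1 a b t f x) 4 (mem_Ioi.mpr (by norm_num)))
      unfold V1
      rw [if_pos (show x < (4:ℝ) by linarith)]
      refine V_ge (mul_pos he4 (mul_pos (mul_pos hmA hmB) hmC)).le he4.le measurableSet_Ioo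
        (fun z hz => ⟨by linarith [hz.1], by linarith [hz.2]⟩) ?_
      intro z hz
      obtain ⟨hz1, hz2⟩ := hz
      have h1 : 7/16 ≤ (4:ℝ) ^ 2 - (x - z) ^ 2 := by nlinarith
      have h1' : (4:ℝ) ^ 2 - (x - z) ^ 2 ≤ 16 := by nlinarith
      have h2 : 7/16 ≤ (4:ℝ) ^ 2 - (x + z) ^ 2 := by nlinarith
      have h2' : (4:ℝ) ^ 2 - (x + z) ^ 2 ≤ 16 := by nlinarith
      have hzc := hCz z (by linarith) (by linarith)
      have hb := mul_bound3 (hA _ h1 h1') (hB _ h2 h2') hzc hmA.le hmB.le hmC.le (hf z)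
      calc (4:ℝ) ^ (-(2*a) - 2*b) * (mA * mB * mC) * f z
          = (4:ℝ) ^ (-(2*a) - 2*b) * (mA * mB * mC * f z) := by ring
        _ ≤ (4:ℝ) ^ (-(2*a) - 2*b) *
              (((4:ℝ) ^ 2 - (x - z) ^ 2) ^ (-a - 1/2) *
                ((4:ℝ) ^ 2 - (x + z) ^ 2) ^ (a + b - 1/2) * z ^ (2*a + 1) * f z) :=
            mul_le_mul_of_nonneg_left hb he4.le
  · refine ⟨mD, (4:ℝ) ^ (-(2*a) - 2*b) * (mD * mC),
      hmD, mul_pos he4 (mul_pos hmD hmC), fun f hf => ⟨?_, ?_⟩⟩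
    · intro x hx
      obtain ⟨hx0, hx2⟩ := hx
      refine le_trans ?_
        (le_iSup₂ (f := fun t (_ : t ∈ Ioi (0:ℝ)) => V2 a b t f x) 1 (mem_Ioi.mpr one_pos))
      unfold V2
      rw [if_pos (show x < (1:ℝ) by linarith)]
      refine V_ge hmD.le (Real.rpow_nonneg (by norm_num) _) measurableSet_Ioo
        (Ioo_subset_Ioo_right (by linarith)) ?_
      intro z hz
      obtain ⟨hz0, hz4⟩ := hz
      have h1 : 7/16 ≤ (1:ℝ) ^ 2 - (x - z) ^ 2 := by nlinarith
      have h1' : (1:ℝ) ^ 2 - (x - z) ^ 2 ≤ 16 := by nlinarith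
      have hw : 0 ≤ z ^ (2*a + 1) * f z :=
        mul_nonneg (Real.rpow_nonneg hz0.le _) (hf z)
      calc mD * (z ^ (2*a + 1) * f z)
          ≤ ((1:ℝ) ^ 2 - (x - z) ^ 2) ^ (b - 1) * (z ^ (2*a + 1) * f z) :=
            mul_le_mul_of_nonneg_right (hD _ h1 h1') hw
        _ = (1:ℝ) ^ (-(2*a) - 2*b) *
              (((1:ℝ) ^ 2 - (x - z) ^ 2) ^ (b - 1) * z ^ (2*a + 1) * f z) := by
            rw [Real.one_rpow]; ring
    · intro x hx
      obtain ⟨hx0, hx1⟩ := hx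
      refine le_trans ?_
        (le_iSup₂ (f := fun t (_ : t ∈ Ioi (0:ℝ)) => V2 a b t f x) 4 (mem_Ioi.mpr (by norm_num)))
      unfold V2
      rw [if_pos (show x < (4:ℝ) by linarith)]
      refine V_ge (mul_pos he4 (mul_pos hmD hmC)).le he4.le measurableSet_Ioo
        (fun z hz => ⟨by linarith [hz.1], by linarith [hz.2]⟩) ?_
      intro z hz
      obtain ⟨hz1, hz2⟩ := hz
      have h1 : 7/16 ≤ (4:ℝ) ^ 2 - (x - z) ^ 2 := by nlinarith
      have h1' : (4:ℝ) ^ 2 - (x - z) ^ 2 ≤ 16 := by nlinarith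
      have hzc := hCz z (by linarith) (by linarith)
      have hb := mul_bound2 (hD _ h1 h1') hzc hmD.le hmC.le (hf z)
      calc (4:ℝ) ^ (-(2*a) - 2*b) * (mD * mC) * f z
          = (4:ℝ) ^ (-(2*a) - 2*b) * (mD * mC * f z) := by ring
        _ ≤ (4:ℝ) ^ (-(2*a) - 2*b) *
              (((4:ℝ) ^ 2 - (x - z) ^ 2) ^ (b - 1) * z ^ (2*a + 1) * f z) :=
            mul_le_mul_of_nonneg_left hb he4.le
  · refine ⟨mD * Real.log 2, (4:ℝ) ^ (-(2*a) - 2*b) * (mD * Real.log 2 * mC),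
      mul_pos hmD hL2, mul_pos he4 (mul_pos (mul_pos hmD hL2) hmC), fun f hf => ⟨?_, ?_⟩⟩
    · intro x hx
      obtain ⟨hx0, hx2⟩ := hx
      refine le_trans ?_
        (le_iSup₂ (f := fun t (_ : t ∈ Ioi (0:ℝ)) => V2t a b t f x) 1 (mem_Ioi.mpr one_pos))
      unfold V2t
      rw [if_pos (show x < (1:ℝ) by linarith)]
      refine V_ge (mul_pos hmD hL2).le (Real.rpow_nonneg (by norm_num) _) measurableSet_Ioo
        (Ioo_subset_Ioo_right (by linarith)) ?_
      intro z hz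
      obtain ⟨hz0, hz4⟩ := hz
      have h1 : 7/16 ≤ (1:ℝ) ^ 2 - (x - z) ^ 2 := by nlinarith
      have h1' : (1:ℝ) ^ 2 - (x - z) ^ 2 ≤ 16 := by nlinarith
      have h2 : 7/16 ≤ (1:ℝ) ^ 2 - (x + z) ^ 2 := by nlinarith
      have hv2 : (0:ℝ) < (1:ℝ) ^ 2 - (x + z) ^ 2 := lt_of_lt_of_le (by norm_num) h2
      have hratio : (2:ℝ) ≤ 2 * ((1:ℝ) ^ 2 - (x - z) ^ 2) / ((1:ℝ) ^ 2 - (x + z) ^ 2) := by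
        rw [le_div_iff₀ hv2]
        nlinarith [mul_nonneg hx0.le hz0.le]
      have hL : Real.log 2 ≤
          Real.log (2 * ((1:ℝ) ^ 2 - (x - z) ^ 2) / ((1:ℝ) ^ 2 - (x + z) ^ 2)) :=
        Real.log_le_log (by norm_num) hratio
      have hw : 0 ≤ z ^ (2*a + 1) * f z :=
        mul_nonneg (Real.rpow_nonneg hz0.le _) (hf z)
      calc mD * Real.log 2 * (z ^ (2*a + 1) * f z)
          ≤ ((1:ℝ) ^ 2 - (x - z) ^ 2) ^ (b - 1) *
              Real.log (2 * ((1:ℝ) ^ 2 - (x - z) ^ 2) / ((1:ℝ) ^ 2 - (x + z) ^ 2)) *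
              (z ^ (2*a + 1) * f z) :=
            mul_bound2 (hD _ h1 h1') hL hmD.le hL2.le hw
        _ = (1:ℝ) ^ (-(2*a) - 2*b) *
              (((1:ℝ) ^ 2 - (x - z) ^ 2) ^ (b - 1) *
                Real.log (2 * ((1:ℝ) ^ 2 - (x - z) ^ 2) / ((1:ℝ) ^ 2 - (x + z) ^ 2)) *
                z ^ (2*a + 1) * f z) := by
            rw [Real.one_rpow]; ring
    · intro x hx
      obtain ⟨hx0, hx1⟩ := hx
      refine le_trans ?_
        (le_iSup₂ (f := fun t (_ : t ∈ Ioi (0:ℝ)) => V2t a b t f x) 4 (mem_Ioi.mpr (by norm_num)))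
      unfold V2t
      rw [if_pos (show x < (4:ℝ) by linarith)]
      refine V_ge (mul_pos he4 (mul_pos (mul_pos hmD hL2) hmC)).le he4.le measurableSet_Ioo
        (fun z hz => ⟨by linarith [hz.1], by linarith [hz.2]⟩) ?_
      intro z hz
      obtain ⟨hz1, hz2⟩ := hz
      have h1 : 7/16 ≤ (4:ℝ) ^ 2 - (x - z) ^ 2 := by nlinarith
      have h1' : (4:ℝ) ^ 2 - (x - z) ^ 2 ≤ 16 := by nlinarith
      have h2 : 7/16 ≤ (4:ℝ) ^ 2 - (x + z) ^ 2 := by nlinarith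
      have hv2 : (0:ℝ) < (4:ℝ) ^ 2 - (x + z) ^ 2 := lt_of_lt_of_le (by norm_num) h2
      have hratio : (2:ℝ) ≤ 2 * ((4:ℝ) ^ 2 - (x - z) ^ 2) / ((4:ℝ) ^ 2 - (x + z) ^ 2) := by
        rw [le_div_iff₀ hv2]
        nlinarith [mul_nonneg hx0.le (by linarith : (0:ℝ) ≤ z)]
      have hL : Real.log 2 ≤
          Real.log (2 * ((4:ℝ) ^ 2 - (x - z) ^ 2) / ((4:ℝ) ^ 2 - (x + z) ^ 2)) :=
        Real.log_le_log (by norm_num) hratio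
      have hzc := hCz z (by linarith) (by linarith)
      have hb := mul_bound3 (hD _ h1 h1') hL hzc hmD.le hL2.le hmC.le (hf z)
      calc (4:ℝ) ^ (-(2*a) - 2*b) * (mD * Real.log 2 * mC) * f z
          = (4:ℝ) ^ (-(2*a) - 2*b) * (mD * Real.log 2 * mC * f z) := by ring
        _ ≤ (4:ℝ) ^ (-(2*a) - 2*b) *
              (((4:ℝ) ^ 2 - (x - z) ^ 2) ^ (b - 1) *
                Real.log (2 * ((4:ℝ) ^ 2 - (x - z) ^ 2) / ((4:ℝ) ^ 2 - (x + z) ^ 2)) *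
                z ^ (2*a + 1) * f z) :=
            mul_le_mul_of_nonneg_left hb he4.le

set_option maxHeartbeats 2000000 in
/-- necessary conditions for the V-type maximal operators. -/
theorem necessary_conditions_V (a b p δ : ℝ) (ha : -1 < a) (hab : -(1/2) < a + b)
    (hp : 1 < p) (S : (ℝ → ℝ) → ℝ → ℝ≥0∞)
    (hS : S = Vstar1 a b ∨ S = Vstar2 a b ∨ S = Vstar2t a b)
    (hwd : ∀ f : ℝ → ℝ, Measurable f → (∀ z, 0 ≤ f z) → wNormR p δ f < ⊤ →
      ∀ᵐ x ∂(volume.restrict (Set.Ioi (0 : ℝ))), S f x < ⊤)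
    (hbd : ∃ C : ℝ≥0, ∀ f : ℝ → ℝ, Measurable f → (∀ z, 0 ≤ f z) →
      wNorm p δ (S f) ≤ C * wNormR p δ f) :
    δ < (2*a + 2) * p - 1 ∧ -1 < δ := by
  obtain ⟨C, hC⟩ := hbd
  obtain ⟨c₁, c₂, hc₁, hc₂, hlow⟩ := Slb a b S hS
  have hp0 : (0:ℝ) < p := by linarith
  constructor
  · by_contra hcon
    push_neg at hcon
    have hδ1 : (0:ℝ) < δ + 1 := by nlinarith [mul_pos (show (0:ℝ) < 2*a+2 by linarith) hp0]
    have hJ : (∫⁻ x in Ioo (0:ℝ) (1/2:ℝ), ENNReal.ofReal (x ^ δ)) =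
        ENNReal.ofReal ((1/2:ℝ) ^ (δ+1) / (δ+1)) :=
      lint_rpow_Ioo (by linarith) (by norm_num)
    set Jr : ℝ := (1/2:ℝ) ^ (δ+1) / (δ+1) with hJrdef
    have hJrpos : 0 < Jr := div_pos (Real.rpow_pos_of_pos (by norm_num) _) hδ1
    set K : ℝ := c₁ * p / 4 with hKdef
    have hKpos : 0 < K := by positivity
    set A : ℝ := K * Jr ^ (1/p) with hAdef
    have hApos : 0 < A := mul_pos hKpos (Real.rpow_pos_of_pos hJrpos _)
    have main : ∀ ε : ℝ, 0 < ε → ε ≤ 1 → A ≤ (C:ℝ) * ε ^ (1 - 1/p) := by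
      intro ε hε hε1
      have hεp : (0:ℝ) < ε / p := by positivity
      set σ : ℝ := (-δ - 1 + ε) / p with hσdef
      have hσp : σ * p = -δ - 1 + ε := div_mul_cancel₀ _ hp0.ne'
      set f : ℝ → ℝ := (Ioo (0:ℝ) 1).indicator (fun z => z ^ σ) with hfdef
      have hfm : Measurable f :=
        Measurable.indicator (by fun_prop) measurableSet_Ioo
      have hfnn : ∀ z, 0 ≤ f z := fun z =>
        Set.indicator_nonneg (fun y hy => Real.rpow_nonneg (le_of_lt hy.1) _) z
      have hf1 : ∀ x ∈ Ioo (0:ℝ) 1, f x = x ^ σ := by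
        intro x hx; rw [hfdef]; exact indicator_of_mem hx _
      have hf0 : ∀ x, x ∉ Ioo (0:ℝ) 1 → f x = 0 := by
        intro x hx; rw [hfdef]; exact indicator_of_notMem hx _
      have hNR : wNormR p δ f = ENNReal.ofReal ((1/ε) ^ (1/p)) := by
        simp only [wNormR, wNorm]
        have hoff : ∀ x ∈ Ioi (0:ℝ) \ Ioo (0:ℝ) 1,
            ENNReal.ofReal |f x| ^ p * ENNReal.ofReal (x ^ δ) = 0 := by
          intro x hx
          rw [hf0 x hx.2]
          simp [ENNReal.zero_rpow_of_pos hp0]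
        have h2 : ∀ x ∈ Ioo (0:ℝ) 1,
            ENNReal.ofReal |f x| ^ p * ENNReal.ofReal (x ^ δ) =
            ENNReal.ofReal (x ^ (ε - 1)) := by
          intro x hx
          have hx0 := hx.1
          rw [hf1 x hx, abs_of_nonneg (Real.rpow_nonneg hx0.le _),
            ENNReal.ofReal_rpow_of_nonneg (Real.rpow_nonneg hx0.le _) hp0.le,
            ← Real.rpow_mul hx0.le,
            ← ENNReal.ofReal_mul (Real.rpow_nonneg hx0.le _),
            ← Real.rpow_add hx0,
            show σ * p + δ = ε - 1 by rw [hσp]; ring]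
        rw [lint_support measurableSet_Ioo (fun x hx => hx.1) hoff,
          setLIntegral_congr_fun measurableSet_Ioo h2,
          lint_rpow_Ioo (show (-1:ℝ) < ε - 1 by linarith) one_pos,
          show ε - 1 + 1 = ε by ring, Real.one_rpow,
          ENNReal.ofReal_rpow_of_pos (by positivity)]
      have hexp : 2*a + 1 + σ ≤ ε/p - 1 := by
        have h3 : σ ≤ ε/p - (2*a+2) := by
          rw [hσdef, div_le_iff₀ hp0]
          have h4 : (ε/p - (2*a+2))*p = ε - (2*a+2)*p := by field_simp
          rw [h4]; linarith
        linarith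
      have hinner : ENNReal.ofReal ((1/4:ℝ) ^ (ε/p) / (ε/p)) ≤
          ∫⁻ z in Ioo (0:ℝ) (1/4:ℝ), ENNReal.ofReal (z ^ (2*a + 1) * f z) := by
        have heq := lint_rpow_Ioo (e := ε/p - 1) (r := (1/4:ℝ)) (by linarith) (by norm_num)
        rw [show ε/p - 1 + 1 = ε/p by ring] at heq
        rw [← heq]
        refine setLIntegral_mono' measurableSet_Ioo (fun z hz => ENNReal.ofReal_le_ofReal ?_)
        have hz0 := hz.1
        have hz1 : z < 1 := by linarith [hz.2]
        rw [hf1 z ⟨hz0, hz1⟩, ← Real.rpow_add hz0]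
        exact Real.rpow_le_rpow_of_exponent_ge hz0 hz1.le (by linarith)
      have h14 : (1/4:ℝ) ≤ (1/4:ℝ) ^ (ε/p) := by
        have h := Real.rpow_le_rpow_of_exponent_ge (by norm_num : (0:ℝ) < 1/4) (by norm_num)
          (show ε/p ≤ 1 by rw [div_le_one hp0]; linarith)
        rwa [Real.rpow_one] at h
      have hquart : ENNReal.ofReal (K / ε) ≤
          ENNReal.ofReal c₁ * ENNReal.ofReal ((1/4:ℝ) ^ (ε/p) / (ε/p)) := by
        rw [← ENNReal.ofReal_mul hc₁.le]
        apply ENNReal.ofReal_le_ofReal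
        rw [hKdef, div_div_eq_mul_div, ← mul_div_assoc, div_le_div_iff₀ hε hε]
        have h5 : (0:ℝ) ≤ c₁ * p := mul_nonneg hc₁.le hp0.le
        have key : 0 ≤ c₁ * p * ε * ((1/4:ℝ)^(ε/p) - 1/4) :=
          mul_nonneg (mul_nonneg h5 hε.le) (by linarith)
        nlinarith [key]
      have hSlow : ∀ x ∈ Ioo (0:ℝ) (1/2:ℝ), ENNReal.ofReal (K/ε) ≤ S f x := by
        intro x hx
        calc ENNReal.ofReal (K/ε)
            ≤ ENNReal.ofReal c₁ * ENNReal.ofReal ((1/4:ℝ) ^ (ε/p) / (ε/p)) := hquart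
          _ ≤ ENNReal.ofReal c₁ * ∫⁻ z in Ioo (0:ℝ) (1/4:ℝ),
                ENNReal.ofReal (z ^ (2*a + 1) * f z) := mul_le_mul' le_rfl hinner
          _ ≤ S f x := (hlow f hfnn).1 x hx
      have hwlow : ENNReal.ofReal (K/ε * Jr ^ (1/p)) ≤ wNorm p δ (S f) := by
        simp only [wNorm]
        have hstep : ENNReal.ofReal ((K/ε)^p * Jr) ≤
            ∫⁻ x in Ioi (0:ℝ), S f x ^ p * ENNReal.ofReal (x ^ δ) := by
          calc ENNReal.ofReal ((K/ε)^p * Jr)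
              = ENNReal.ofReal ((K/ε)^p) * ENNReal.ofReal Jr :=
                ENNReal.ofReal_mul (by positivity)
            _ = ENNReal.ofReal (K/ε) ^ p *
                  ∫⁻ x in Ioo (0:ℝ) (1/2:ℝ), ENNReal.ofReal (x ^ δ) := by
                rw [hJ, ENNReal.ofReal_rpow_of_pos (by positivity)]
            _ = ∫⁻ x in Ioo (0:ℝ) (1/2:ℝ),
                  ENNReal.ofReal (K/ε) ^ p * ENNReal.ofReal (x ^ δ) :=
                (lintegral_const_mul' _ _
                  (ENNReal.rpow_ne_top_of_nonneg hp0.le ENNReal.ofReal_ne_top)).symm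
            _ ≤ ∫⁻ x in Ioo (0:ℝ) (1/2:ℝ), S f x ^ p * ENNReal.ofReal (x ^ δ) :=
                setLIntegral_mono' measurableSet_Ioo (fun x hx =>
                  mul_le_mul' (ENNReal.rpow_le_rpow (hSlow x hx) hp0.le) le_rfl)
            _ ≤ _ := lintegral_mono_set (fun x hx => hx.1)
        calc ENNReal.ofReal (K/ε * Jr ^ (1/p))
            = ENNReal.ofReal ((K/ε)^p * Jr) ^ (1/p) := by
              rw [ENNReal.ofReal_rpow_of_pos (by positivity)]
              congr 1
              rw [Real.mul_rpow (by positivity) hJrpos.le, ← Real.rpow_mul (by positivity),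
                mul_one_div_cancel hp0.ne', Real.rpow_one]
          _ ≤ _ := ENNReal.rpow_le_rpow hstep (by positivity)
      have hcomb : ENNReal.ofReal (K/ε * Jr ^ (1/p)) ≤
          (C : ℝ≥0∞) * ENNReal.ofReal ((1/ε) ^ (1/p)) := by
        refine hwlow.trans ?_
        have h6 := hC f hfm hfnn
        rwa [hNR] at h6
      rw [← ENNReal.ofReal_coe_nnreal, ← ENNReal.ofReal_mul C.coe_nonneg,
        ENNReal.ofReal_le_ofReal_iff (by positivity)] at hcomb
      have h7 := mul_le_mul_of_nonneg_right hcomb hε.le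
      have hre : ((1/ε:ℝ) ^ (1/p)) * ε = ε ^ (1 - 1/p) := by
        rw [one_div, Real.inv_rpow hε.le, ← Real.rpow_neg hε.le]
        have h8 := (Real.rpow_add hε (-(1/p)) 1).symm
        rw [Real.rpow_one] at h8
        rw [h8, show -(1/p) + 1 = 1 - 1/p by ring]
      calc A = K/ε * Jr ^ (1/p) * ε := by rw [hAdef]; field_simp
        _ ≤ (C:ℝ) * ((1/ε) ^ (1/p)) * ε := h7
        _ = (C:ℝ) * ε ^ (1 - 1/p) := by rw [mul_assoc, hre]
    have hqpos : (0:ℝ) < 1 - 1/p := by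
      have : 1/p < 1 := by rw [div_lt_one hp0]; exact hp
      linarith
    have hden : (0:ℝ) < (C:ℝ) + 1 := by positivity
    have hbase : 0 < A / ((C:ℝ) + 1) := div_pos hApos hden
    set ε0 : ℝ := min 1 ((A / ((C:ℝ) + 1)) ^ (1/(1 - 1/p))) with hε0def
    have hε0pos : 0 < ε0 := lt_min one_pos (Real.rpow_pos_of_pos hbase _)
    have h1 := main ε0 hε0pos (min_le_left _ _)
    have h2 : ε0 ^ (1 - 1/p) ≤ A / ((C:ℝ) + 1) := by
      have h3 : ε0 ^ (1 - 1/p) ≤ ((A / ((C:ℝ)+1)) ^ (1/(1 - 1/p))) ^ (1 - 1/p) :=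
        Real.rpow_le_rpow hε0pos.le (min_le_right _ _) hqpos.le
      rwa [← Real.rpow_mul hbase.le, one_div_mul_cancel hqpos.ne', Real.rpow_one] at h3
    have h3 : (C:ℝ) * ε0 ^ (1 - 1/p) ≤ (C:ℝ) * (A / ((C:ℝ)+1)) :=
      mul_le_mul_of_nonneg_left h2 C.coe_nonneg
    have h4 : (C:ℝ) * (A / ((C:ℝ)+1)) < A := by
      rw [mul_div_assoc', div_lt_iff₀ hden]
      nlinarith
    linarith
  · by_contra hcon
    push_neg at hcon
    set f : ℝ → ℝ := (Ioo (1:ℝ) 2).indicator (fun _ => (1:ℝ)) with hfdef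
    have hfm : Measurable f := measurable_const.indicator measurableSet_Ioo
    have hfnn : ∀ z, 0 ≤ f z := fun z => Set.indicator_nonneg (fun _ _ => zero_le_one) z
    have hf1 : ∀ x ∈ Ioo (1:ℝ) 2, f x = 1 := by
      intro x hx; rw [hfdef]; exact indicator_of_mem hx _
    have hf0 : ∀ x, x ∉ Ioo (1:ℝ) 2 → f x = 0 := by
      intro x hx; rw [hfdef]; exact indicator_of_notMem hx _
    have hfin : wNormR p δ f < ⊤ := by
      simp only [wNormR, wNorm]
      rw [lint_support measurableSet_Ioo (fun x hx => lt_trans one_pos hx.1)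
        (fun x hx => by rw [hf0 x hx.2]; simp [ENNReal.zero_rpow_of_pos hp0])]
      refine ENNReal.rpow_lt_top_of_nonneg (by positivity) ?_
      have hbound : ∀ x ∈ Ioo (1:ℝ) 2,
          ENNReal.ofReal |f x| ^ p * ENNReal.ofReal (x ^ δ) ≤
          ENNReal.ofReal (max 1 ((2:ℝ) ^ δ)) := by
        intro x hx
        rw [hf1 x hx]
        simp only [abs_one, ENNReal.ofReal_one, ENNReal.one_rpow, one_mul]
        apply ENNReal.ofReal_le_ofReal
        rcases le_or_gt 0 δ with hδ | hδ
        · exact le_trans (Real.rpow_le_rpow (by linarith [hx.1]) hx.2.le hδ) (le_max_right _ _)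
        · refine le_trans ?_ (le_max_left _ _)
          have h9 := Real.rpow_le_rpow_of_nonpos one_pos hx.1.le hδ.le
          rwa [Real.one_rpow] at h9
      refine ne_top_of_le_ne_top ?_ (setLIntegral_mono' measurableSet_Ioo hbound)
      rw [setLIntegral_const, Real.volume_Ioo]
      exact (ENNReal.mul_lt_top ENNReal.ofReal_lt_top ENNReal.ofReal_lt_top).ne
    have hI2 : (∫⁻ z in Ioo (1:ℝ) 2, ENNReal.ofReal (f z)) = 1 := by
      rw [setLIntegral_congr_fun measurableSet_Ioo
        (fun z hz => by rw [hf1 z hz])]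
      simp [Real.volume_Ioo]
      norm_num
    have hSlow2 : ∀ x ∈ Ioo (0:ℝ) 1, ENNReal.ofReal c₂ ≤ S f x := by
      intro x hx
      have h10 := (hlow f hfnn).2 x hx
      rwa [hI2, mul_one] at h10
    have hint_top : (∫⁻ x in Ioi (0:ℝ), S f x ^ p * ENNReal.ofReal (x ^ δ)) = ⊤ := by
      refine eq_top_iff.mpr ?_
      have hne : ENNReal.ofReal c₂ ^ p ≠ 0 :=
        (ENNReal.rpow_pos (ENNReal.ofReal_pos.mpr hc₂) ENNReal.ofReal_ne_top).ne'
      calc (⊤:ℝ≥0∞) = ENNReal.ofReal c₂ ^ p * ∫⁻ x in Ioo (0:ℝ) 1, ENNReal.ofReal (x ^ δ) := by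
            rw [lint_rpow_Ioo_top hcon, ENNReal.mul_top hne]
        _ = ∫⁻ x in Ioo (0:ℝ) 1, ENNReal.ofReal c₂ ^ p * ENNReal.ofReal (x ^ δ) :=
            (lintegral_const_mul' _ _
              (ENNReal.rpow_ne_top_of_nonneg hp0.le ENNReal.ofReal_ne_top)).symm
        _ ≤ ∫⁻ x in Ioo (0:ℝ) 1, S f x ^ p * ENNReal.ofReal (x ^ δ) :=
            setLIntegral_mono' measurableSet_Ioo (fun x hx =>
              mul_le_mul' (ENNReal.rpow_le_rpow (hSlow2 x hx) hp0.le) le_rfl)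
        _ ≤ _ := lintegral_mono_set (fun x hx => hx.1)
    have htop : wNorm p δ (S f) = ⊤ := by
      simp only [wNorm]
      rw [hint_top]
      exact ENNReal.top_rpow_of_pos (by positivity)
    have h11 := hC f hfm hfnn
    rw [htop] at h11
    have hlt : (C:ℝ≥0∞) * wNormR p δ f < ⊤ :=
      ENNReal.mul_lt_top ENNReal.coe_lt_top hfin
    exact absurd (top_le_iff.mp h11) hlt.ne
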